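/- If f and f̂ are differentiable functions with f + β and f̂ - β̂ nowhere zero, satisfying (f(t) + β)(f̂(t) - β̂) = e^{-2t} for all t with β̂ = β + 1, then f satisfies f' + f² = β² + e^{-2t} if and only if f̂ satisfies f̂' + f̂² = β̂² + e^{-2t}. -/
import Mathlib


/-- Equivalence of the two Riccati equations related by
`(f + β)(f̂ - β̂) = e^{-2t}`, `β̂ = β + 1`. -/
theorem riccati_equivalence
    (f fh : ℝ → ℝ) (β βh : ℝ) (hβh : βh = β + 1)
    (hf : Differentiable ℝ f) (hfh : Differentiable ℝ fh)
    (hden1 : ∀ t, f t + β ≠ 0) (hden2 : ∀ t, fh t - βh ≠ 0)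
    (hrel : ∀ t, (f t + β) * (fh t - βh) = Real.exp (-2 * t)) :
    (∀ t, deriv f t + (f t) ^ 2 = β ^ 2 + Real.exp (-2 * t)) ↔
    (∀ t, deriv fh t + (fh t) ^ 2 = βh ^ 2 + Real.exp (-2 * t)) := by
  have hder : ∀ t, deriv f t * (fh t - βh) + (f t + β) * deriv fh t
      = -2 * Real.exp (-2 * t) := by
    intro t
    have h1 : HasDerivAt (fun s => (f s + β) * (fh s - βh))
        (deriv f t * (fh t - βh) + (f t + β) * deriv fh t) t :=
      (((hf t).hasDerivAt.add_const β)).mul ((hfh t).hasDerivAt.sub_const βh)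
    have h2 : HasDerivAt (fun s : ℝ => Real.exp (-2 * s))
        (-2 * Real.exp (-2 * t)) t := by
      have := (((hasDerivAt_id t).const_mul (-2 : ℝ))).exp
      simpa [mul_comm] using this
    have heq : (fun s => (f s + β) * (fh s - βh))
        = fun s : ℝ => Real.exp (-2 * s) := funext hrel
    rw [heq] at h1
    exact h1.unique h2
  constructor
  · intro h t
    have key : (f t + β) * (deriv fh t + (fh t) ^ 2 - βh ^ 2 - Real.exp (-2 * t)) = 0 := by
      subst hβh
      linear_combination (hder t) - (fh t - (β + 1)) * (h t)
        + (1 + f t + fh t) * (hrel t)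
    rcases mul_eq_zero.1 key with h' | h'
    · exact absurd h' (hden1 t)
    · linarith
  · intro h t
    have key : (fh t - βh) * (deriv f t + (f t) ^ 2 - β ^ 2 - Real.exp (-2 * t)) = 0 := by
      subst hβh
      linear_combination (hder t) - (f t + β) * (h t)
        + (1 + f t + fh t) * (hrel t)
    rcases mul_eq_zero.1 key with h' | h'
    · exact absurd h' (hden2 t)
    · linarith
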